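/- arXiv:math/0509715 — 12 statements merged into one kernel-verified Lean document; each statement's English description precedes it below -/
import Mathlib

section
/- For every nonnegative integer m, the alternating sum ∑_{k=0}^{2m} (-1)^k * C(2m+k, k) * C(4m+2-k, 2m+2) equals C(3m+1, m+1). -/
/-!
The sum is the coefficient of `x^(2m)` in `(1 + x)^-(2m+1) (1 - x)^-(2m+3)`, and this series equals
`(1 + x)^2 (1 - x^2)^-(2m+3)`. Writing `(1 + x)^2 = (1 + x^2) + 2x`, only the even part
`(1 + y) (1 - y)^-(2m+3)` at `y = x^2` contributes to an even coefficient, and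
`(1 + y) = 2 - (1 - y)` gives its coefficient of `y^m` as `2 C(3m+2, 2m+2) - C(3m+1, 2m+1) = C(3m+1, m+1)`.
-/

open PowerSeries

namespace PowerSeries

variable {S : Type*} [CommRing S]

theorem one_add_X_pow_mul_rescale_invOneSubPow (d : ℕ) :
    (1 + X) ^ d * rescale (-1) (invOneSubPow S d).val = 1 := by
  have h := congrArg (rescale (-1 : S)) (invOneSubPow S d).inv_val
  rwa [invOneSubPow_inv_eq_one_sub_pow, map_mul, map_pow, map_sub, map_one, rescale_X, map_neg,
    map_one, neg_one_mul, sub_neg_eq_add] at h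

theorem one_sub_X_sq_pow_mul_expand_invOneSubPow (d : ℕ) :
    (1 - X ^ 2) ^ d * expand 2 two_ne_zero (invOneSubPow S d).val = 1 := by
  have h := congrArg (expand 2 two_ne_zero (R := S)) (invOneSubPow S d).inv_val
  rwa [invOneSubPow_inv_eq_one_sub_pow, map_mul, map_pow, map_sub, map_one, expand_X] at h

theorem rescale_invOneSubPow_mul_invOneSubPow (a c : ℕ) :
    rescale (-1) (invOneSubPow S a).val * (invOneSubPow S (a + c)).val =
      (1 + X) ^ c * expand 2 two_ne_zero (invOneSubPow S (a + c)).val := by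
  refine left_inv_eq_right_inv (a := (1 + X) ^ a * (1 - X) ^ (a + c)) ?_ ?_
  · calc rescale (-1) (invOneSubPow S a).val * (invOneSubPow S (a + c)).val *
          ((1 + X) ^ a * (1 - X) ^ (a + c))
        = ((1 + X) ^ a * rescale (-1) (invOneSubPow S a).val) *
            ((1 - X) ^ (a + c) * (invOneSubPow S (a + c)).val) := by ring
      _ = 1 := by
        rw [one_add_X_pow_mul_rescale_invOneSubPow, ← invOneSubPow_inv_eq_one_sub_pow,
          (invOneSubPow S (a + c)).inv_val, one_mul]
  · calc (1 + X) ^ a * (1 - X) ^ (a + c) *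
          ((1 + X) ^ c * expand 2 two_ne_zero (invOneSubPow S (a + c)).val)
        = ((1 + X) * (1 - X)) ^ (a + c) * expand 2 two_ne_zero (invOneSubPow S (a + c)).val := by
          rw [mul_pow]; ring
      _ = 1 := by
          rw [show (1 + X) * (1 - X) = (1 - X ^ 2 : S⟦X⟧) by ring]
          exact one_sub_X_sq_pow_mul_expand_invOneSubPow _

theorem coeff_two_mul_X_mul_expand_two (f : S⟦X⟧) (m : ℕ) :
    coeff (2 * m) (X * expand 2 two_ne_zero f) = 0 := by
  cases m with
  | zero => exact coeff_zero_X_mul _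
  | succ m =>
    rw [show 2 * (m + 1) = (2 * m + 1) + 1 by ring, coeff_succ_X_mul,
      coeff_expand_of_not_dvd _ _ _ (by omega)]

theorem coeff_two_mul_one_add_X_sq_mul_expand_two (f : S⟦X⟧) (m : ℕ) :
    coeff (2 * m) ((1 + X) ^ 2 * expand 2 two_ne_zero f) = coeff m ((1 + X) * f) := by
  have hsplit : (1 + X) ^ 2 * expand 2 two_ne_zero f =
      expand 2 two_ne_zero ((1 + X) * f) + X * expand 2 two_ne_zero f +
        X * expand 2 two_ne_zero f := by
    rw [map_mul, map_add, map_one, expand_X]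
    ring
  rw [hsplit, map_add, map_add, coeff_expand_mul, coeff_two_mul_X_mul_expand_two, add_zero,
    add_zero]

theorem coeff_one_add_X_mul_invOneSubPow (d n : ℕ) :
    coeff n ((1 + X) * (invOneSubPow S (d + 2)).val) =
      2 * ((d + 1 + n).choose (d + 1) : S) - (d + n).choose d := by
  have h : (1 - X) * (invOneSubPow S (d + 2)).val = (invOneSubPow S (d + 1)).val := by
    simpa using one_sub_pow_mul_invOneSubPow_val_add_eq_invOneSubPow_val S (d + 1) 1
  rw [show (1 + X) * (invOneSubPow S (d + 2)).val = (invOneSubPow S (d + 2)).val +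
      (invOneSubPow S (d + 2)).val - (1 - X) * (invOneSubPow S (d + 2)).val by ring, h,
    invOneSubPow_val_succ_eq_mk_add_choose, invOneSubPow_val_succ_eq_mk_add_choose, map_sub,
    map_add, coeff_mk, coeff_mk, two_mul]

theorem coeff_rescale_invOneSubPow_mul_invOneSubPow (a b n : ℕ) :
    coeff n (rescale (-1) (invOneSubPow S (a + 1)).val * (invOneSubPow S (b + 1)).val) =
      ∑ k ∈ Finset.range (n + 1), (-1 : S) ^ k * (a + k).choose k * (b + (n - k)).choose b := by
  rw [coeff_mul, Finset.Nat.sum_antidiagonal_eq_sum_range_succ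
    (fun i j => coeff i (rescale (-1) (invOneSubPow S (a + 1)).val) *
      coeff j (invOneSubPow S (b + 1)).val)]
  simp only [coeff_rescale, invOneSubPow_val_succ_eq_mk_add_choose, coeff_mk, mul_assoc]
  exact Finset.sum_congr rfl fun k _ => by rw [Nat.choose_symm_add]

end PowerSeries

theorem two_mul_choose_sub_choose (m : ℕ) :
    2 * ((3 * m + 2).choose (2 * m + 2) : ℤ) - (3 * m + 1).choose (2 * m + 1) =
      (3 * m + 1).choose (m + 1) := by
  have hZ := Nat.add_one_mul_choose_eq (3 * m + 1) (2 * m + 1)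
  have hY := Nat.choose_succ_right_eq (3 * m + 1) (2 * m)
  rw [← Nat.choose_symm_of_eq_add (show 3 * m + 1 = (m + 1) + 2 * m by ring),
    show 3 * m + 1 - 2 * m = m + 1 by omega] at hY
  have hZ' : (3 * m + 2 : ℤ) * (3 * m + 1).choose (2 * m + 1) =
      (3 * m + 2).choose (2 * m + 2) * (2 * m + 2) := by exact_mod_cast hZ
  have hY' : ((3 * m + 1).choose (2 * m + 1) : ℤ) * (2 * m + 1) =
      (3 * m + 1).choose (m + 1) * (m + 1) := by exact_mod_cast hY
  refine mul_left_cancel₀ (show (m + 1 : ℤ) ≠ 0 by positivity) ?_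
  linear_combination hY' - hZ'

theorem stmt_1 (m : ℕ) :
    ∑ k ∈ Finset.range (2 * m + 1),
      (-1 : ℤ) ^ k * (Nat.choose (2 * m + k) k) * (Nat.choose (4 * m + 2 - k) (2 * m + 2))
      = Nat.choose (3 * m + 1) (m + 1) := by
  calc _ = coeff (2 * m) (rescale (-1) (invOneSubPow ℤ (2 * m + 1)).val *
          (invOneSubPow ℤ (2 * m + 1 + 2)).val) := by
        rw [coeff_rescale_invOneSubPow_mul_invOneSubPow (2 * m) (2 * m + 2)]
        refine Finset.sum_congr rfl fun k hk => ?_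
        rw [show 4 * m + 2 - k = 2 * m + 2 + (2 * m - k) by
          have := Finset.mem_range.mp hk; omega]
    _ = coeff m ((1 + X) * (invOneSubPow ℤ (2 * m + 1 + 2)).val) := by
        rw [rescale_invOneSubPow_mul_invOneSubPow, coeff_two_mul_one_add_X_sq_mul_expand_two]
    _ = 2 * ((3 * m + 2).choose (2 * m + 2) : ℤ) - (3 * m + 1).choose (2 * m + 1) := by
        rw [coeff_one_add_X_mul_invOneSubPow]
        ring_nf
    _ = _ := two_mul_choose_sub_choose m
end

section
/- For positive integers n and nonnegative k with k ≤ n-1, the alternating sum ∑_{m=n}^{2n-1} (-1)^{m-n-k} * C(3n, n+1+m) * C(m-1, n-1) * C(m-n, k) equals C(n-1+k, n-1) * C(2n-k, n+1). -/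
/-!
Only the terms with `m ≥ n + k` survive. Writing `n = k + M + 1` and `m = n + k + t`, the
trinomial revision `C(m-1, n-1) C(m-n, k) = C(n-1+k, n-1) C(m-1, t)` pulls out the factor
`C(n-1+k, n-1)`, and `C(3n, n+1+m) = C(3n, M-t)`. The remaining sum
`∑ₜ (-1)^t C(n-1+k+t, t) C(3n, M-t)` is the Chu–Vandermonde convolution of
`C(-(n+k), ·)` with `C(3n, ·)`, i.e. the coefficient of `x^M` in `(1+x)^(2n-k)`, and
`C(2n-k, M) = C(2n-k, n+1)`.
-/

open Finset

theorem sum_range_neg_one_pow_mul_add_choose_mul_choose (r N M : ℕ) :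
    ∑ t ∈ range (M + 1), (-1 : ℤ) ^ t * (r + t).choose t * (N + r + 1).choose (M - t) =
      N.choose M := by
  have h := Ring.add_choose_eq (r := -((r + 1 : ℕ) : ℤ)) (s := ((N + r + 1 : ℕ) : ℤ)) M
    (Commute.all _ _)
  rw [show -((r + 1 : ℕ) : ℤ) + ((N + r + 1 : ℕ) : ℤ) = N by push_cast; ring,
    Ring.choose_natCast, Nat.sum_antidiagonal_eq_sum_range_succ_mk] at h
  refine h ▸ sum_congr rfl fun t _ => ?_
  rw [Ring.choose_neg, show ((r + 1 : ℕ) : ℤ) + t - 1 = ((r + t : ℕ) : ℤ) by push_cast; ring,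
    Ring.choose_natCast, Ring.choose_natCast, Units.smul_def, Int.coe_negOnePow_natCast,
    smul_eq_mul]

theorem Nat.add_add_choose_mul_add_choose (a b t : ℕ) :
    (a + b + t).choose a * (b + t).choose b = (a + b).choose a * (a + b + t).choose t := by
  rw [choose_symm_of_eq_add (show a + b + t = a + (b + t) by ring), choose_symm_add,
    choose_mul (le_add_self : t ≤ b + t), choose_symm_add, Nat.add_sub_cancel,
    Nat.add_sub_cancel, mul_comm]

theorem stmt_2 (n k : ℕ) (hn : 0 < n) (hk : k ≤ n - 1) :
    ∑ m ∈ Finset.Icc n (2 * n - 1),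
      (-1 : ℤ) ^ (m - n + k) * (Nat.choose (3 * n) (n + 1 + m)) *
        (Nat.choose (m - 1) (n - 1)) * (Nat.choose (m - n) k)
      = Nat.choose (n - 1 + k) (n - 1) * Nat.choose (2 * n - k) (n + 1) := by
  obtain ⟨M, rfl⟩ : ∃ M, n = k + M + 1 := ⟨n - 1 - k, by omega⟩
  rw [← Ico_add_one_right_eq_Icc, Nat.sub_add_cancel (by omega),
    ← sum_Ico_consecutive _ (Nat.le_add_right _ k) (by omega : k + M + 1 + k ≤ 2 * (k + M + 1)),
    sum_eq_zero fun m hm => by simp [Nat.choose_eq_zero_of_lt (by grind : m - (k + M + 1) < k)],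
    zero_add, sum_Ico_eq_sum_range, show 2 * (k + M + 1) - (k + M + 1 + k) = M + 1 by omega]
  rw [show k + M + 1 - 1 + k = k + M + k by omega, Nat.add_sub_cancel,
    Nat.choose_symm_of_eq_add (show 2 * (k + M + 1) - k = k + M + 1 + 1 + M by omega),
    show 2 * (k + M + 1) - k = k + 2 * M + 2 by omega,
    ← sum_range_neg_one_pow_mul_add_choose_mul_choose (k + M + k) _ M, mul_sum]
  refine sum_congr rfl fun t ht => ?_
  have htM : t ≤ M := Nat.lt_succ_iff.mp (mem_range.mp ht)
  have htri : ((k + M + k + t).choose (k + M) * (k + t).choose k : ℤ) =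
      (k + M + k).choose (k + M) * (k + M + k + t).choose t := by
    exact_mod_cast Nat.add_add_choose_mul_add_choose (k + M) k t
  rw [show k + M + 1 + k + t - (k + M + 1) + k = t + 2 * k by omega, pow_add, pow_mul,
    neg_one_sq, one_pow, mul_one, show k + M + 1 + k + t - 1 = k + M + k + t by omega,
    show k + M + 1 + k + t - (k + M + 1) = k + t by omega,
    Nat.choose_symm_of_eq_add
      (show 3 * (k + M + 1) = k + M + 1 + 1 + (k + M + 1 + k + t) + (M - t) by omega),
    show 3 * (k + M + 1) = k + 2 * M + 2 + (k + M + k) + 1 by omega]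
  linear_combination (-1) ^ t * ((k + 2 * M + 2 + (k + M + k) + 1).choose (M - t) : ℤ) * htri
end

section
/- For every positive integer n and every k with 1 ≤ k ≤ n-1, the number n divides C(n-1+k, n-1) * C(2n-k, n+1), i.e., d_{n,k} = (1/n) * C(n-1+k, n-1) * C(2n-k, n+1) is a nonnegative integer. -/
/-!
With `A = C(m + k, m)` and `B = C(2(m + 1) - k, m + 2)`, the identity
`C(m + k, m + 1) (m + 1) = A k` gives `m + 1 ∣ A k`, hence `m + 1 ∣ A (m + 1 - k)`, while
`B (m + 2) = C(2(m + 1) - k, m + 1) (m + 1 - k)`. So `m + 1` divides `A B (m + 2)`, and it is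
coprime to `m + 2`.
-/

namespace Nat

theorem succ_dvd_choose_add_mul (m k : ℕ) : m + 1 ∣ (m + k).choose m * k := by
  have h := choose_succ_right_eq (m + k) m
  rw [Nat.add_sub_cancel_left] at h
  exact Dvd.intro_left _ h

theorem succ_dvd_choose_add_mul_succ_sub (m k : ℕ) :
    m + 1 ∣ (m + k).choose m * (m + 1 - k) := by
  rw [Nat.mul_sub]
  exact Nat.dvd_sub (Dvd.intro_left _ rfl) (succ_dvd_choose_add_mul m k)

theorem two_mul_sub_choose_succ_mul_succ (n k : ℕ) :
    (2 * n - k).choose (n + 1) * (n + 1) = (2 * n - k).choose n * (n - k) := by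
  rw [choose_succ_right_eq]
  congr 1
  omega

theorem succ_dvd_choose_add_mul_choose (m k : ℕ) :
    m + 1 ∣ (m + k).choose m * (2 * (m + 1) - k).choose (m + 2) := by
  have hcop : Coprime (m + 1) (m + 2) := coprime_self_add_right.mpr (coprime_one_right _)
  refine hcop.dvd_of_dvd_mul_right ?_
  rw [mul_assoc, two_mul_sub_choose_succ_mul_succ, mul_left_comm]
  exact Dvd.dvd.mul_left (succ_dvd_choose_add_mul_succ_sub m k) _

end Nat

theorem stmt_4_general (n k : ℕ) :
    n ∣ Nat.choose (n - 1 + k) (n - 1) * Nat.choose (2 * n - k) (n + 1) := by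
  rcases n with _ | m
  · simp
  · simpa using Nat.succ_dvd_choose_add_mul_choose m k

theorem stmt_4 (n k : ℕ) (hn : 0 < n) (hk1 : 1 ≤ k) (hk2 : k ≤ n - 1) :
    n ∣ Nat.choose (n - 1 + k) (n - 1) * Nat.choose (2 * n - k) (n + 1) :=
  stmt_4_general n k
end

section
/- For every positive integer n and every m with n ≤ m ≤ 2n-1, the number n divides C(3n, n+1+m) * C(m-1, n-1), i.e., N_{n,m} = (1/n) * C(3n, n+1+m) * C(m-1, n-1) is a nonnegative integer. -/
/-!
Put `X = C(3n, n+1+m) C(m-1, n-1)`. Absorbing a factor into either binomial coefficient via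
`k C(N, k) = N C(N-1, k-1)` shows that `n` divides both `m X` (since `m C(m-1, n-1) = n C(m, n)`)
and `(n + 1 + m) X` (since `(n+1+m) C(3n, n+1+m) = 3n C(3n-1, n+m)`). Hence `n ∣ (m + 1) X`,
and subtracting `m X` gives `n ∣ X`.
-/

theorem Nat.mul_choose_sub_one {n k : ℕ} (hk : 0 < k) :
    n * (n - 1).choose (k - 1) = k * n.choose k := by
  obtain ⟨k, rfl⟩ := Nat.exists_eq_add_one_of_ne_zero hk.ne'
  cases n with
  | zero => simp
  | succ n => simpa [mul_comm] using Nat.add_one_mul_choose_eq n k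

theorem Nat.dvd_mul_choose_of_dvd {d n k : ℕ} (h : d ∣ n) : d ∣ k * n.choose k := by
  rcases k.eq_zero_or_pos with rfl | hk
  · simp
  · rw [← Nat.mul_choose_sub_one hk]
    exact h.mul_right _

theorem stmt_5_general (n m : ℕ) (hn : 0 < n) :
    n ∣ Nat.choose (3 * n) (n + 1 + m) * Nat.choose (m - 1) (n - 1) := by
  set X := Nat.choose (3 * n) (n + 1 + m) * Nat.choose (m - 1) (n - 1)
  have h_m : n ∣ m * X := by
    rw [mul_left_comm, Nat.mul_choose_sub_one hn]
    exact (dvd_mul_right n _).mul_left _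
  have h_top : n ∣ (n + 1 + m) * X := by
    rw [← mul_assoc]
    exact (Nat.dvd_mul_choose_of_dvd (dvd_mul_left n 3)).mul_right _
  have h_succ : n ∣ (m + 1) * X :=
    (Nat.dvd_add_right (dvd_mul_right n X)).mp (by rwa [← add_mul, ← add_assoc, add_right_comm])
  exact (Nat.dvd_add_right h_m).mp (by rwa [← add_one_mul])

theorem stmt_5 (n m : ℕ) (hn : 0 < n) (hm1 : n ≤ m) (hm2 : m ≤ 2 * n - 1) :
    n ∣ Nat.choose (3 * n) (n + 1 + m) * Nat.choose (m - 1) (n - 1) :=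
  stmt_5_general n m hn
end

section
/- For every positive integer n, the sum over k from 0 to n-1 of d_{n,k} = (1/n) * C(n-1+k, n-1) * C(2n-k, n+1) equals the generalized Catalan number c_n = (1/(2n+1)) * C(3n, n). -/
/-!
After pulling out the factor `1/n`, the sum is a convolution of the coefficients of
`(1 - X)⁻ⁿ` and `(1 - X)⁻⁽ⁿ⁺²⁾`, so it equals the coefficient `C(3n, 2n+1)` of `X ^ (n - 1)` in
`(1 - X)⁻⁽²ⁿ⁺²⁾`. Finally `C(3n, 2n+1) / n = C(3n, n) / (2n+1)`.
-/

open Finset PowerSeries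

theorem Nat.sum_antidiagonal_add_choose_mul_add_choose (a b m : ℕ) :
    ∑ ij ∈ antidiagonal m, (a + ij.1).choose a * (b + ij.2).choose b
      = (a + b + 1 + m).choose (a + b + 1) := by
  have h := congrArg (coeff m ∘ Units.val) (invOneSubPow_add ℤ (a + 1) (b + 1))
  simp only [Function.comp_apply, Units.val_mul, coeff_mul,
    show a + 1 + (b + 1) = a + b + 1 + 1 by ring, invOneSubPow_val_succ_eq_mk_add_choose,
    coeff_mk] at h
  exact_mod_cast h.symm

theorem Nat.sum_range_add_choose_mul_choose (a b m : ℕ) :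
    ∑ k ∈ range (m + 1), (a + k).choose a * (b + m - k).choose b
      = (a + b + 1 + m).choose (a + b + 1) := by
  rw [← Nat.sum_antidiagonal_add_choose_mul_add_choose,
    Finset.Nat.sum_antidiagonal_eq_sum_range_succ (fun i j => (a + i).choose a * (b + j).choose b)]
  refine sum_congr rfl fun k hk => ?_
  rw [Nat.add_sub_assoc (Nat.lt_succ_iff.mp (mem_range.mp hk))]

theorem Nat.choose_three_mul_mul (n : ℕ) :
    (3 * n).choose n * n = (3 * n).choose (2 * n + 1) * (2 * n + 1) := by
  rcases n with _ | m
  · simp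
  · rw [Nat.choose_succ_right_eq,
      Nat.choose_symm_of_eq_add (show 3 * (m + 1) = (2 * (m + 1) + 1) + m by ring)]
    congr 1
    omega

theorem stmt_6 (n : ℕ) (hn : 0 < n) :
    ∑ k ∈ Finset.range n,
      (1 / n : ℚ) * (Nat.choose (n - 1 + k) (n - 1)) * (Nat.choose (2 * n - k) (n + 1))
      = (1 / (2 * n + 1) : ℚ) * (Nat.choose (3 * n) n) := by
  obtain ⟨m, rfl⟩ : ∃ m, n = m + 1 := ⟨n - 1, by omega⟩
  have hsum : ∑ k ∈ range (m + 1), (m + k).choose m * (2 * (m + 1) - k).choose (m + 1 + 1)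
      = (3 * (m + 1)).choose (2 * (m + 1) + 1) := by
    rw [← show m + (m + 2) + 1 + m = 3 * (m + 1) by ring,
      show 2 * (m + 1) + 1 = m + (m + 2) + 1 by ring, ← Nat.sum_range_add_choose_mul_choose]
    refine sum_congr rfl fun k _ => ?_
    rw [show 2 * (m + 1) - k = m + 2 + m - k by omega]
  have hsumQ := congrArg (Nat.cast : ℕ → ℚ) hsum
  have hchoose := congrArg (Nat.cast : ℕ → ℚ) (Nat.choose_three_mul_mul (m + 1))
  push_cast at hsumQ hchoose
  simp only [Nat.add_sub_cancel, mul_assoc, ← mul_sum, hsumQ]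
  push_cast
  field_simp
  linarith
end

section
/- For every positive integer n, the alternating sum ∑_{k=0}^{n-1} (-1)^k * (1/n) * C(n-1+k, n-1) * C(2n-k, n+1) equals (1/(2m+1)) * C(3m, m) if n = 2m is even, and equals (1/(2m+1)) * C(3m+1, m+1) if n = 2m+1 is odd. -/
/-!
`truncNegBinom m K u v` is the part of `v`-degree `< K` of `u^(m+K) (u - v)^(-(m+1))`, hence
`(u - v)^(m+1) * truncNegBinom m K u v ≡ u^(m+K) [mod v^K]`.
Since `C(2n-k, n+1) = [x^(n-1)] (1+x)^(2n-k)`, `n` times the sum is the coefficient of `x^(n-1)` in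
`(1+x)^(n+1) * truncNegBinom (n-1) n (1+x) (-x)`, which is `(1+x)^(3n) (1+2x)^(-n)` modulo `x^n`
(`1 + 2x` is invertible modulo `x^n`). Expanding instead `1 + 2x = (1+x)^2 - x^2` in powers of
`x^2` gives the same coefficient as `∑_{j < ⌈n/2⌉} (n - 2j) C(n-1+j, j)`, a sum that telescopes
to the closed forms.
-/

open Finset Polynomial

section CommRing

variable {R : Type*} [CommRing R]

def truncNegBinom (m K : ℕ) (u v : R) : R :=
  ∑ k ∈ range K, ((m + k).choose k : R) * v ^ k * u ^ (K - 1 - k)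

theorem truncNegBinom_succ (m K : ℕ) (u v : R) :
    truncNegBinom m (K + 1) u v = u * truncNegBinom m K u v + (m + K).choose K * v ^ K := by
  rw [truncNegBinom, truncNegBinom, sum_range_succ, mul_sum, Nat.add_sub_cancel, Nat.sub_self,
    pow_zero, mul_one]
  congr 1
  refine sum_congr rfl fun k hk => ?_
  have hk := mem_range.mp hk
  rw [mul_left_comm u, ← pow_succ', show K - 1 - k + 1 = K - k by omega]

theorem sub_mul_truncNegBinom_succ (m K : ℕ) (u v : R) :
    (u - v) * truncNegBinom (m + 1) K u v
      = u * truncNegBinom m K u v - (m + K).choose (m + 1) * v ^ K := by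
  induction K with
  | zero => simp [truncNegBinom]
  | succ K ih =>
    rw [truncNegBinom_succ, truncNegBinom_succ]
    have symm : (m + 1 + K).choose K = (m + 1 + K).choose (m + 1) := Nat.choose_symm_add.symm
    have pascal : (m + 1 + K).choose K = (m + K).choose K + (m + K).choose (m + 1) := by
      rw [symm, show m + 1 + K = m + K + 1 by omega, Nat.choose_succ_succ', Nat.choose_symm_add]
    rw [show m + (K + 1) = m + 1 + K by omega, ← symm]
    push_cast [pascal]
    linear_combination u * ih

theorem pow_dvd_pow_sub_sub_pow_mul_truncNegBinom (m K : ℕ) (u v : R) :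
    v ^ K ∣ u ^ (m + K) - (u - v) ^ (m + 1) * truncNegBinom m K u v := by
  induction m with
  | zero =>
    have geom := geom_sum₂_mul v u K
    simp only [truncNegBinom, zero_add, Nat.choose_self, Nat.cast_one, one_mul, pow_one]
    exact ⟨1, by linear_combination geom⟩
  | succ m ih =>
    have step : u ^ (m + 1 + K) - (u - v) ^ (m + 1 + 1) * truncNegBinom (m + 1) K u v
        = u * (u ^ (m + K) - (u - v) ^ (m + 1) * truncNegBinom m K u v)
          + v ^ K * ((m + K).choose (m + 1) * (u - v) ^ (m + 1)) := by
      rw [pow_succ _ (m + 1), mul_assoc, sub_mul_truncNegBinom_succ]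
      ring
    rw [step]
    exact dvd_add (dvd_mul_of_dvd_right ih u) (dvd_mul_right _ _)

theorem coeff_X_pow_mul_one_add_X_pow (a b d : ℕ) (h : a ≤ d) :
    ((X : R[X]) ^ a * (1 + X) ^ b).coeff d = (b.choose (d - a) : R) := by
  rw [coeff_X_pow_mul', if_pos h, coeff_one_add_X_pow]

theorem isCoprime_X_pow_one_add_two_mul_X_pow (n : ℕ) :
    IsCoprime ((X : R[X]) ^ n) ((1 + 2 * X) ^ n) :=
  IsCoprime.pow ⟨-2, 1, by ring⟩

theorem coeff_one_add_X_pow_mul_truncNegBinom_neg_X (n : ℕ) :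
    ((1 + X) ^ (n + 1) * truncNegBinom (n - 1) n (1 + X) (-X : R[X])).coeff (n - 1)
      = ∑ k ∈ range n, (-1 : R) ^ k * (n - 1 + k).choose k * (2 * n - k).choose (n + 1) := by
  rw [truncNegBinom, mul_sum, finsetSum_coeff]
  refine sum_congr rfl fun k hk => ?_
  have hk := mem_range.mp hk
  have term : (1 + X : R[X]) ^ (n + 1) *
        (((n - 1 + k).choose k : R[X]) * (-X) ^ k * (1 + X) ^ (n - 1 - k))
      = C ((-1) ^ k * ((n - 1 + k).choose k : R)) * (X ^ k * (1 + X) ^ (2 * n - k)) := by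
    rw [show 2 * n - k = n + 1 + (n - 1 - k) by omega, pow_add, neg_pow]
    simp only [map_mul, map_pow, map_neg, map_one, map_natCast]
    ring
  rw [term, coeff_C_mul, coeff_X_pow_mul_one_add_X_pow _ _ _ (by omega),
    show n - 1 - k = 2 * n - k - (n + 1) by omega, Nat.choose_symm (by omega)]

theorem coeff_one_add_X_pow_mul_truncNegBinom_X_sq (n J : ℕ) (hJ : 2 * J ≤ n + 1) :
    ((1 + X) ^ (n + 2 - 2 * J) * truncNegBinom (n - 1) J ((1 + X) ^ 2) (X ^ 2 : R[X])).coeff (n - 1)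
      = ∑ j ∈ range J, ((n : R) - 2 * j) * (n - 1 + j).choose j := by
  rw [truncNegBinom, mul_sum, finsetSum_coeff]
  refine sum_congr rfl fun j hj => ?_
  have hj := mem_range.mp hj
  have term : (1 + X : R[X]) ^ (n + 2 - 2 * J) *
        (((n - 1 + j).choose j : R[X]) * (X ^ 2) ^ j * ((1 + X) ^ 2) ^ (J - 1 - j))
      = ((n - 1 + j).choose j : R[X]) * (X ^ (2 * j) * (1 + X) ^ (n - 2 * j)) := by
    rw [show n - 2 * j = n + 2 - 2 * J + 2 * (J - 1 - j) by omega, pow_add, pow_mul, pow_mul]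
    ring
  rw [term, coeff_natCast_mul, coeff_X_pow_mul_one_add_X_pow _ _ _ (by omega),
    show n - 2 * j = n - 1 - 2 * j + 1 by omega, Nat.choose_succ_self_right,
    show n - 1 - 2 * j + 1 = n - 2 * j by omega, Nat.cast_sub (by omega)]
  push_cast
  ring

theorem sum_neg_one_pow_mul_choose_mul_choose (n : ℕ) (hn : 0 < n) :
    ∑ k ∈ range n, (-1 : R) ^ k * (n - 1 + k).choose k * (2 * n - k).choose (n + 1)
      = ∑ j ∈ range ((n + 1) / 2), ((n : R) - 2 * j) * (n - 1 + j).choose j := by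
  set J := (n + 1) / 2
  set P := truncNegBinom (n - 1) n (1 + X) (-X : R[X])
  set Q := truncNegBinom (n - 1) J ((1 + X) ^ 2) (X ^ 2 : R[X])
  have hP : X ^ n ∣ (1 + X) ^ (n - 1 + n) - (1 + 2 * X) ^ n * P := by
    have h := pow_dvd_pow_sub_sub_pow_mul_truncNegBinom (n - 1) n (1 + X : R[X]) (-X)
    rw [Nat.sub_add_cancel hn, show (1 + X : R[X]) - -X = 1 + 2 * X by ring] at h
    exact (Dvd.intro_left _ (neg_pow (X : R[X]) n).symm).trans h
  have hQ : X ^ n ∣ ((1 + X) ^ 2) ^ (n - 1 + J) - (1 + 2 * X) ^ n * Q := by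
    have h := pow_dvd_pow_sub_sub_pow_mul_truncNegBinom (n - 1) J ((1 + X : R[X]) ^ 2) (X ^ 2)
    rw [Nat.sub_add_cancel hn, show ((1 + X : R[X]) ^ 2) - X ^ 2 = 1 + 2 * X by ring,
      ← pow_mul] at h
    exact (pow_dvd_pow X (by omega)).trans h
  have hPQ : X ^ n ∣ (1 + X) ^ (n + 1) * P - (1 + X) ^ (n + 2 - 2 * J) * Q := by
    refine (isCoprime_X_pow_one_add_two_mul_X_pow n).dvd_of_dvd_mul_left ?_
    have hexp : (1 + X : R[X]) ^ (n + 2 - 2 * J) * ((1 + X) ^ 2) ^ (n - 1 + J)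
        = (1 + X) ^ (n + 1) * (1 + X) ^ (n - 1 + n) := by
      rw [← pow_mul, ← pow_add, ← pow_add]
      congr 1
      omega
    have hsplit : (1 + 2 * X) ^ n * ((1 + X) ^ (n + 1) * P - (1 + X) ^ (n + 2 - 2 * J) * Q)
        = (1 + X) ^ (n + 2 - 2 * J) * (((1 + X) ^ 2) ^ (n - 1 + J) - (1 + 2 * X) ^ n * Q)
          - (1 + X) ^ (n + 1) * ((1 + X) ^ (n - 1 + n) - (1 + 2 * X) ^ n * P) := by
      linear_combination -hexp
    rw [hsplit]
    exact dvd_sub (dvd_mul_of_dvd_right hQ _) (dvd_mul_of_dvd_right hP _)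
  have hcoeff := X_pow_dvd_iff.mp hPQ (n - 1) (by omega)
  rwa [coeff_sub, sub_eq_zero, coeff_one_add_X_pow_mul_truncNegBinom_neg_X,
    coeff_one_add_X_pow_mul_truncNegBinom_X_sq n J (by omega)] at hcoeff

theorem mul_sum_range_sub_two_mul_mul_choose (n J : ℕ) (hn : 0 < n) :
    (n + 1 : R) * ∑ j ∈ range J, ((n : R) - 2 * j) * (n - 1 + j).choose j
      = J * (n + 3 - 2 * J) * (n - 1 + J).choose J := by
  induction J with
  | zero => simp
  | succ J ih =>
    have hrec : ((J + 1 : ℕ) : R) * (n + J).choose (J + 1)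
        = (n + J : ℕ) * (n - 1 + J).choose J := by
      rw [← Nat.cast_mul, ← Nat.cast_mul, mul_comm, show n + J = n - 1 + J + 1 by omega,
        ← Nat.add_one_mul_choose_eq]
    rw [sum_range_succ, mul_add, ih, show n - 1 + (J + 1) = n + J by omega]
    push_cast at hrec ⊢
    linear_combination -(n + 1 - 2 * (J : R)) * hrec

end CommRing

theorem three_mul_choose_three_mul_sub_one {m : ℕ} (hm : 0 < m) :
    3 * (3 * m - 1).choose m = 2 * (3 * m).choose m := by
  have h := Nat.choose_mul_succ_eq (3 * m - 1) m
  rw [show 3 * m - 1 + 1 = 3 * m by omega, show 3 * m - m = 2 * m by omega] at h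
  exact Nat.eq_of_mul_eq_mul_left hm (by linarith)

theorem stmt_7 (n m : ℕ) (hn : 0 < n) :
    (n = 2 * m →
      ∑ k ∈ Finset.range n,
        (-1 : ℚ) ^ k * (1 / n) * (Nat.choose (n - 1 + k) (n - 1)) *
          (Nat.choose (2 * n - k) (n + 1))
        = (1 / (2 * m + 1) : ℚ) * (Nat.choose (3 * m) m)) ∧
    (n = 2 * m + 1 →
      ∑ k ∈ Finset.range n,
        (-1 : ℚ) ^ k * (1 / n) * (Nat.choose (n - 1 + k) (n - 1)) *
          (Nat.choose (2 * n - k) (n + 1))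
        = (1 / (2 * m + 1) : ℚ) * (Nat.choose (3 * m + 1) (m + 1))) := by
  have hsum : ∑ k ∈ range n, (-1 : ℚ) ^ k * (1 / n) * (Nat.choose (n - 1 + k) (n - 1)) *
        (Nat.choose (2 * n - k) (n + 1))
      = 1 / n *
        ∑ k ∈ range n, (-1 : ℚ) ^ k * (n - 1 + k).choose k * (2 * n - k).choose (n + 1) := by
    rw [mul_sum]
    refine sum_congr rfl fun k _ => ?_
    rw [Nat.choose_symm_add]
    ring
  have closed := mul_sum_range_sub_two_mul_mul_choose (R := ℚ) n ((n + 1) / 2) hn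
  rw [← sum_neg_one_pow_mul_choose_mul_choose n hn] at closed
  rw [hsum]
  generalize ∑ k ∈ range n, (-1 : ℚ) ^ k * (n - 1 + k).choose k * (2 * n - k).choose (n + 1) = S
    at closed ⊢
  constructor
  · rintro rfl
    rw [show (2 * m + 1) / 2 = m by omega, show 2 * m - 1 + m = 3 * m - 1 by omega] at closed
    have hchoose : (3 : ℚ) * (3 * m - 1).choose m = 2 * (3 * m).choose m := by
      exact_mod_cast three_mul_choose_three_mul_sub_one (m := m) (by omega)
    have hm : (m : ℚ) ≠ 0 := by norm_cast; omega
    push_cast at closed ⊢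
    field_simp
    linear_combination closed + m * hchoose
  · rintro rfl
    rw [show (2 * m + 1 + 1) / 2 = m + 1 by omega,
      show 2 * m + 1 - 1 + (m + 1) = 3 * m + 1 by omega] at closed
    push_cast at closed ⊢
    congr 1
    exact mul_left_cancel₀ (by positivity) (closed.trans (by ring))
end

section
/- For every positive integer m, 2m+1 divides C(3m+1, m+1) * (2m) + C(3m, m), equivalently (1/(2m+1)) * C(3m+1, m+1) is an integer. -/
/-! Absorption gives `C(3m+1, m+1) * (m+1) = C(3m+1, m) * (2m+1)` and
`(3m+1) * C(3m, m) = C(3m+1, m+1) * (m+1)`. Since `2m+1` is coprime to both `m+1` and `3m+1`,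
it divides `C(3m+1, m+1)` and then `C(3m, m)`. -/

namespace Nat

theorem sub_dvd_choose_succ_of_coprime {n k : ℕ} (h : Coprime (n - k) (k + 1)) :
    n - k ∣ n.choose (k + 1) :=
  h.dvd_of_dvd_mul_right (Dvd.intro_left _ (choose_succ_right_eq n k).symm)

theorem dvd_choose_of_dvd_choose_succ_succ {d n k : ℕ} (hd : d ∣ (n + 1).choose (k + 1))
    (h : Coprime d (n + 1)) : d ∣ n.choose k :=
  h.dvd_of_dvd_mul_left (add_one_mul_choose_eq n k ▸ hd.mul_right _)

theorem coprime_two_mul_add_one_add_one (m : ℕ) : Coprime (2 * m + 1) (m + 1) :=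
  Nat.isCoprime_iff_coprime.mp ⟨-1, 2, by push_cast; ring⟩

theorem coprime_two_mul_add_one_three_mul_add_one (m : ℕ) :
    Coprime (2 * m + 1) (3 * m + 1) :=
  Nat.isCoprime_iff_coprime.mp ⟨3, -2, by push_cast; ring⟩

theorem two_mul_add_one_dvd_choose (m : ℕ) : 2 * m + 1 ∣ (3 * m + 1).choose (m + 1) := by
  have h := sub_dvd_choose_succ_of_coprime (n := 3 * m + 1) (k := m)
  rw [show 3 * m + 1 - m = 2 * m + 1 by omega] at h
  exact h (coprime_two_mul_add_one_add_one m)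

end Nat

theorem stmt_8_general (m : ℕ) :
    (2 * m + 1) ∣ Nat.choose (3 * m + 1) (m + 1) * (2 * m) + Nat.choose (3 * m) m ∧
    (2 * m + 1) ∣ Nat.choose (3 * m + 1) (m + 1) := by
  have h := Nat.two_mul_add_one_dvd_choose m
  have h' : 2 * m + 1 ∣ (3 * m).choose m :=
    Nat.dvd_choose_of_dvd_choose_succ_succ h (Nat.coprime_two_mul_add_one_three_mul_add_one m)
  exact ⟨dvd_add (h.mul_right _) h', h⟩

theorem stmt_8 (m : ℕ) (hm : 0 < m) :
    (2 * m + 1) ∣ Nat.choose (3 * m + 1) (m + 1) * (2 * m) + Nat.choose (3 * m) m ∧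
    (2 * m + 1) ∣ Nat.choose (3 * m + 1) (m + 1) :=
  stmt_8_general m
end

section
/- For every nonnegative integer n, 2n+1 divides C(3n, n), i.e., c_n = (1/(2n+1)) * C(3n, n) is an integer. -/
/- Since `C(N, k) * k = C(N, k - 1) * (N + 1 - k)`, the factor `N + 1 - k` divides `C(N, k) * k`;
as `gcd (N + 1 - k, k) = gcd (N + 1, k)`, it divides `C(N, k)` itself once `N + 1` is coprime
to `k`. For `N = 3n`, `k = n` the factor is `2n + 1`, and `3n + 1` is coprime to `n`. -/

namespace Nat

theorem succ_sub_dvd_choose_of_coprime {N k : ℕ} (h : (N + 1).Coprime k) :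
    N + 1 - k ∣ N.choose k := by
  rcases k with _ | j
  · obtain rfl : N = 0 := by simpa using h
    simp
  by_cases hjN : j ≤ N
  · have hcop : (N - j).Coprime (j + 1) := by
      simpa using (coprime_sub_self_left (by omega : j + 1 ≤ N + 1)).mpr h
    rw [Nat.add_sub_add_right]
    exact hcop.dvd_of_dvd_mul_right ⟨N.choose j, by rw [choose_succ_right_eq, mul_comm]⟩
  · rw [choose_eq_zero_of_lt (by omega)]
    exact dvd_zero _

end Nat

theorem stmt_9 (n : ℕ) : (2 * n + 1) ∣ Nat.choose (3 * n) n := by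
  have hcop : (3 * n + 1).Coprime n :=
    (Nat.coprime_mul_right_add_left 1 n 3).mpr (Nat.coprime_one_left n)
  simpa [show 3 * n + 1 - n = 2 * n + 1 by omega] using Nat.succ_sub_dvd_choose_of_coprime hcop
end

section
/- For all positive integers n and nonnegative integers k, ∑_{m=n}^{2n-1} (-1)^{m-n} * C(m-n, k) * N_{n,m} = (-1)^k * d_{n,k}, where N_{n,m} = (1/n) * C(3n, n+1+m) * C(m-1, n-1) and d_{n,k} = (1/n) * C(n-1+k, n-1) * C(2n-k, n+1). -/
/-! Substituting `m = n + j` and using `C(3n, 2n+1+j) = C(3n, n-1-j)`, the trinomial revision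
`C(j, k) C(n-1+j, n-1) = C(n-1+k, k) C(n-1+j, j-k)` turns the sum into
`(-1)^k C(n-1+k, k) ∑ᵢ (-1)^i C(n-1+k+i, i) C(3n, n-1-k-i)`. Since
`C(-(a+1), i) = (-1)^i C(a+i, i)`, the inner sum is the Chu–Vandermonde expansion of
`C(-(n+k) + 3n, n-1-k) = C(2n-k, n+1)`. -/

open Finset

theorem sum_antidiagonal_neg_one_pow_mul_choose_mul_choose (a c r : ℕ) :
    ∑ ij ∈ antidiagonal r, (-1 : ℤ) ^ ij.1 * (a + ij.1).choose ij.1 * (a + 1 + c).choose ij.2 =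
      c.choose r := by
  have h := Ring.add_choose_eq (r := -((a + 1 : ℕ) : ℤ)) (s := ((a + 1 + c : ℕ) : ℤ)) r
    (Commute.all _ _)
  rw [show -((a + 1 : ℕ) : ℤ) + ((a + 1 + c : ℕ) : ℤ) = c by push_cast; ring,
    Ring.choose_natCast] at h
  rw [h]
  refine sum_congr rfl fun ij _ => ?_
  rw [Ring.choose_neg, show ((a + 1 : ℕ) : ℤ) + ij.1 - 1 = ((a + ij.1 : ℕ) : ℤ) by push_cast; ring,
    Ring.choose_natCast, Ring.choose_natCast, Units.smul_def, Int.negOnePow_def, smul_eq_mul,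
    zpow_natCast, Units.val_pow_eq_pow_val, Units.val_neg, Units.val_one, mul_assoc]

theorem Nat.choose_mul_add_choose (b k i : ℕ) :
    (k + i).choose k * (b + k + i).choose b = (b + k).choose b * (b + k + i).choose i := by
  have h := Nat.choose_mul (n := b + k + i) (k := b + k) (s := b) (by omega)
  rw [Nat.choose_symm_add, show b + k + i - b = k + i by omega, Nat.add_sub_cancel_left] at h
  rw [mul_comm, ← h, mul_comm]

theorem sum_range_neg_one_pow_mul_choose_mul_choose_mul_choose (b c k s : ℕ) :
    ∑ j ∈ range (k + s + 1),
        (-1 : ℤ) ^ j * j.choose k * (b + j).choose b * (b + k + 1 + c).choose (k + s - j) =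
      (-1) ^ k * (b + k).choose b * c.choose s := by
  rw [add_assoc, sum_range_add, sum_eq_zero fun j hj => by
    simp [Nat.choose_eq_zero_of_lt (mem_range.1 hj)], zero_add]
  rw [← sum_antidiagonal_neg_one_pow_mul_choose_mul_choose (b + k) c s,
    Nat.sum_antidiagonal_eq_sum_range_succ_mk, mul_sum]
  refine sum_congr rfl fun i _ => ?_
  have h : ((k + i).choose k * (b + k + i).choose b : ℤ) =
      (b + k).choose b * (b + k + i).choose i := mod_cast Nat.choose_mul_add_choose b k i
  rw [show k + s - (k + i) = s - i by omega, show b + (k + i) = b + k + i by ring, pow_add]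
  linear_combination ((-1 : ℤ) ^ k * (-1) ^ i * (b + k + 1 + c).choose (s - i)) * h

theorem sum_range_neg_one_pow_mul_choose_mul_choose_mul_choose_three_mul (n k : ℕ) :
    ∑ j ∈ range n,
        (-1 : ℤ) ^ j * j.choose k * (n - 1 + j).choose (n - 1) * (3 * n).choose (2 * n + 1 + j) =
      (-1) ^ k * (n - 1 + k).choose (n - 1) * (2 * n - k).choose (n + 1) := by
  rcases le_or_gt n k with hnk | hkn
  · rw [Nat.choose_eq_zero_of_lt (by omega : 2 * n - k < n + 1), Nat.cast_zero, mul_zero]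
    exact sum_eq_zero fun j hj => by
      simp [Nat.choose_eq_zero_of_lt ((mem_range.1 hj).trans_le hnk)]
  obtain ⟨s, rfl⟩ : ∃ s, n = k + s + 1 := ⟨n - k - 1, by omega⟩
  have h := sum_range_neg_one_pow_mul_choose_mul_choose_mul_choose (k + s) (k + 2 * s + 2) k s
  rw [Nat.add_sub_cancel, show 2 * (k + s + 1) - k = k + 2 * s + 2 by omega,
    ← Nat.choose_symm_of_eq_add (show k + 2 * s + 2 = s + (k + s + 1 + 1) by ring), ← h]
  refine sum_congr rfl fun j hj => ?_
  have hj : j ≤ k + s := Nat.lt_succ_iff.1 (mem_range.1 hj)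
  rw [show k + s + k + 1 + (k + 2 * s + 2) = 3 * (k + s + 1) by ring,
    Nat.choose_symm_of_eq_add (show 3 * (k + s + 1) = 2 * (k + s + 1) + 1 + j + (k + s - j) by
      omega)]

theorem stmt_11 (n k : ℕ) (hn : 0 < n) :
    ∑ m ∈ Finset.Icc n (2 * n - 1),
      (-1 : ℚ) ^ (m - n) * (Nat.choose (m - n) k) *
        ((1 / n) * (Nat.choose (3 * n) (n + 1 + m)) * (Nat.choose (m - 1) (n - 1)))
      = (-1 : ℚ) ^ k *
          ((1 / n) * (Nat.choose (n - 1 + k) (n - 1)) * (Nat.choose (2 * n - k) (n + 1))) := by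
  have h := congrArg (fun z : ℤ => (z : ℚ) / n)
    (sum_range_neg_one_pow_mul_choose_mul_choose_mul_choose_three_mul n k)
  simp only [Int.cast_sum, sum_div] at h
  rw [← Finset.Ico_add_one_right_eq_Icc, sum_Ico_eq_sum_range,
    show 2 * n - 1 + 1 - n = n by omega]
  convert h using 1
  · refine sum_congr rfl fun j _ => ?_
    rw [Nat.add_sub_cancel_left, show n + 1 + (n + j) = 2 * n + 1 + j by ring,
      show n + j - 1 = n - 1 + j by omega]
    push_cast
    ring
  · push_cast
    ring
end

section
/- For every nonnegative integer m, the number of symmetric ternary trees with 2m internal vertices is (1/(2m+1)) * C(3m, m), and the number with 2m+1 internal vertices is (1/(2m+1)) * C(3m+1, m+1). -/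
/-- Ternary trees: a single node, or a root with three ordered ternary subtrees. -/
inductive TTree : Type
  | leaf : TTree
  | node (a b c : TTree) : TTree

namespace TTree

/-- Number of internal vertices. -/
def internal : TTree → ℕ
  | leaf => 0
  | node a b c => 1 + internal a + internal b + internal c

/-- Mirror reflection. -/
def mirror : TTree → TTree
  | leaf => leaf
  | node a b c => node (mirror c) (mirror b) (mirror a)

/-- A ternary tree is symmetric if it is a single node, or its third subtree is
the reflection of the first and its second subtree is symmetric. -/
def IsSym : TTree → Prop
  | leaf => True
  | node a b c => c = mirror a ∧ IsSym b

end TTree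

open TTree

namespace TTreeAux

lemma internal_mirror (t : TTree) : internal (mirror t) = internal t := by
  induction t with
  | leaf => rfl
  | node a b c ha hb hc => simp only [mirror, internal, ha, hb, hc]; omega

lemma internal_eq_zero {t : TTree} (h : internal t = 0) : t = TTree.leaf := by
  cases t with
  | leaf => rfl
  | node a b c => simp [internal] at h

lemma finite_le : ∀ n : ℕ, {t : TTree | internal t ≤ n}.Finite
  | 0 => by
      apply Set.Finite.subset (Set.finite_singleton TTree.leaf)
      intro t ht
      simp only [Set.mem_setOf_eq, Nat.le_zero] at ht
      simp [internal_eq_zero ht]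
  | (n+1) => by
      have hS := finite_le n
      apply Set.Finite.subset (Set.Finite.insert TTree.leaf
        (Set.Finite.image (fun x : TTree × TTree × TTree => TTree.node x.1 x.2.1 x.2.2)
          (hS.prod (hS.prod hS))))
      intro t ht
      cases t with
      | leaf => exact Set.mem_insert _ _
      | node a b c =>
          simp only [Set.mem_setOf_eq, internal] at ht
          refine Set.mem_insert_of_mem _ ⟨(a, b, c), ?_, rfl⟩
          refine ⟨?_, ?_, ?_⟩ <;> simp only [Set.mem_setOf_eq] <;> omega

lemma finite_eq (n : ℕ) : {t : TTree | internal t = n}.Finite :=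
  (finite_le n).subset (fun t ht => le_of_eq ht)

def LSet (r n : ℕ) : Set (List TTree) := {l | l.length = r ∧ (l.map internal).sum = n}

lemma finite_LSet : ∀ r n, (LSet r n).Finite
  | 0, n => by
      apply Set.Finite.subset (Set.finite_singleton ([] : List TTree))
      rintro l ⟨hlen, _⟩
      simp [List.length_eq_zero_iff.mp hlen]
  | (r+1), n => by
      have key : LSet (r+1) n ⊆ (fun p : TTree × List TTree => p.1 :: p.2) ''
          ({t | internal t ≤ n} ×ˢ ⋃ k ∈ Set.Iic n, LSet r k) := by
        rintro l ⟨hlen, hsum⟩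
        cases l with
        | nil => simp at hlen
        | cons t l' =>
          refine ⟨(t, l'), ⟨?_, ?_⟩, rfl⟩
          · simp only [List.map_cons, List.sum_cons] at hsum
            simp only [Set.mem_setOf_eq]; omega
          · simp only [Set.mem_iUnion, Set.mem_Iic]
            refine ⟨(l'.map internal).sum, ?_, ?_, rfl⟩
            · simp only [List.map_cons, List.sum_cons] at hsum; omega
            · simpa using hlen
      exact Set.Finite.subset (Set.Finite.image _ ((finite_le n).prod
        (Set.Finite.biUnion (Set.finite_Iic n) (fun k _ => finite_LSet r k)))) key


lemma LSet_zero (r : ℕ) : LSet r 0 = {List.replicate r TTree.leaf} := by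
  ext l
  simp only [LSet, Set.mem_setOf_eq, Set.mem_singleton_iff]
  constructor
  · rintro ⟨hlen, hsum⟩
    rw [List.eq_replicate_iff]
    refine ⟨hlen, fun b hb => ?_⟩
    apply internal_eq_zero
    have := List.sum_eq_zero_iff.mp hsum (internal b) (List.mem_map_of_mem hb)
    exact this
  · rintro rfl
    constructor
    · simp
    · simp [internal]

lemma LSet_len_zero (n : ℕ) : LSet 0 (n+1) = ∅ := by
  ext l
  simp only [LSet, Set.mem_setOf_eq, Set.mem_empty_iff_false, iff_false, not_and]
  intro hlen
  rw [List.length_eq_zero_iff.mp hlen]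
  simp

def cmb : List TTree → List TTree
  | a :: b :: c :: l => TTree.node a b c :: l
  | l => l

lemma LSet_succ_succ (r n : ℕ) :
    LSet (r+1) (n+1) = (List.cons TTree.leaf '' LSet r (n+1)) ∪ (cmb '' LSet (r+3) n) := by
  ext l
  constructor
  · rintro ⟨hlen, hsum⟩
    cases l with
    | nil => simp at hlen
    | cons t l' =>
      cases t with
      | leaf =>
        left
        refine ⟨l', ⟨?_, ?_⟩, rfl⟩
        · simpa using hlen
        · simpa [internal] using hsum
      | node a b c =>
        right
        refine ⟨a :: b :: c :: l', ⟨?_, ?_⟩, rfl⟩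
        · simp at hlen ⊢; omega
        · simp only [List.map_cons, List.sum_cons, internal] at hsum ⊢; omega
  · rintro (⟨l', ⟨h1, h2⟩, rfl⟩ | ⟨l', ⟨h1, h2⟩, rfl⟩)
    · exact ⟨by simp [h1], by simpa [internal] using h2⟩
    · match l' with
      | a :: b :: c :: l'' =>
        simp only [List.length_cons] at h1
        simp only [List.map_cons, List.sum_cons] at h2
        refine ⟨?_, ?_⟩
        · simp only [cmb, List.length_cons]; omega
        · simp only [cmb, List.map_cons, List.sum_cons, internal]; omega

lemma ncard_rec (r n : ℕ) :
    (LSet (r+1) (n+1)).ncard = (LSet r (n+1)).ncard + (LSet (r+3) n).ncard := by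
  rw [LSet_succ_succ]
  rw [Set.ncard_union_eq ?_ (((finite_LSet r (n+1))).image _) (((finite_LSet (r+3) n)).image _)]
  · rw [Set.ncard_image_of_injective _ (fun a b h => by simpa using h),
      Set.ncard_image_of_injOn ?_]
    intro x hx y hy hxy
    match x, y with
    | a :: b :: c :: l, a' :: b' :: c' :: l' =>
      simp only [cmb, List.cons.injEq, TTree.node.injEq] at hxy
      obtain ⟨⟨h1, h2, h3⟩, h4⟩ := hxy
      simp [h1, h2, h3, h4]
    | a :: b :: c :: l, [] => exact absurd hy.1 (by simp)
    | a :: b :: c :: l, [x'] => exact absurd hy.1 (by simp)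
    | a :: b :: c :: l, [x', y'] => exact absurd hy.1 (by simp)
    | [], _ => exact absurd hx.1 (by simp)
    | [x], _ => exact absurd hx.1 (by simp)
    | [x, y], _ => exact absurd hx.1 (by simp)
  · rw [Set.disjoint_left]
    rintro x ⟨l1, _, rfl⟩ ⟨l2, hl2, hcmb⟩
    match l2 with
    | a :: b :: c :: l'' => simp [cmb] at hcmb
    | [] => exact absurd hl2.1 (by simp)
    | [x'] => exact absurd hl2.1 (by simp)
    | [x', y'] => exact absurd hl2.1 (by simp)


open Nat in
lemma chfac (a b c : ℕ) (h : a = b + c) :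
    (Nat.choose a b : ℚ) * (b ! * c !) = a ! := by
  have hb : b ≤ a := by omega
  have := Nat.choose_mul_factorial_mul_factorial hb
  have hc : a - b = c := by omega
  rw [hc] at this
  exact_mod_cast by rw [← this]; ring

open Nat in
lemma key_id (n r : ℕ) :
    (3*n+r+4) * (r * Nat.choose (3*n+r+3) (n+1) + (r+3) * Nat.choose (3*n+r+3) n)
      = (r+1) * ((3*n+r+3) * Nat.choose (3*n+r+4) (n+1)) := by
  have e1 := chfac (3*n+r+3) (n+1) (2*n+r+2) (by omega)
  have e2 := chfac (3*n+r+3) n (2*n+r+3) (by omega)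
  have e3 := chfac (3*n+r+4) (n+1) (2*n+r+3) (by omega)
  have hA : ((n+1)! : ℚ) = (n+1) * n ! := by exact_mod_cast Nat.factorial_succ n
  have hD : ((2*n+r+3)! : ℚ) = (2*n+r+3) * (2*n+r+2)! := by
    have : (2*n+r+3) = (2*n+r+2) + 1 := by omega
    rw [this]; exact_mod_cast Nat.factorial_succ (2*n+r+2)
  have hG : ((3*n+r+4)! : ℚ) = (3*n+r+4) * (3*n+r+3)! := by
    have : (3*n+r+4) = (3*n+r+3) + 1 := by omega
    rw [this]; exact_mod_cast Nat.factorial_succ (3*n+r+3)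
  have hFn : (n ! : ℚ) ≠ 0 := by exact_mod_cast Nat.factorial_ne_zero n
  have hFB : ((2*n+r+2)! : ℚ) ≠ 0 := by exact_mod_cast Nat.factorial_ne_zero _
  have q : ((3*n+r+4) * (r * Nat.choose (3*n+r+3) (n+1) + (r+3) * Nat.choose (3*n+r+3) n) : ℚ)
      = (r+1) * ((3*n+r+3) * Nat.choose (3*n+r+4) (n+1)) := by
    simp only [hA, hD, hG] at e1 e2 e3
    have hc1 : (Nat.choose (3*n+r+3) (n+1) : ℚ)
        = (3*n+r+3)! / ((n+1) * n ! * (2*n+r+2)!) := by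
      rw [eq_div_iff (by positivity)]; linarith [e1]
    have hc2 : (Nat.choose (3*n+r+3) n : ℚ)
        = (3*n+r+3)! / (n ! * ((2*n+r+3) * (2*n+r+2)!)) := by
      rw [eq_div_iff (by positivity)]; linarith [e2]
    have hc3 : (Nat.choose (3*n+r+4) (n+1) : ℚ)
        = (3*n+r+4) * (3*n+r+3)! / ((n+1) * n ! * ((2*n+r+3) * (2*n+r+2)!)) := by
      rw [eq_div_iff (by positivity)]; linarith [e3]
    rw [hc1, hc2, hc3]
    have hF : ((3*n+r+3)! : ℚ) ≠ 0 := by exact_mod_cast Nat.factorial_ne_zero _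
    field_simp
    push_cast
    ring
  exact_mod_cast q

lemma main_count : ∀ n r, (LSet r n).ncard * (3*n+r) = r * Nat.choose (3*n+r) n := by
  intro n
  induction n with
  | zero =>
    intro r
    rw [LSet_zero]
    simp
  | succ n ih =>
    intro r
    induction r with
    | zero =>
      rw [LSet_len_zero]
      simp
    | succ r ihr =>
      have hrec := ncard_rec r n
      have h1 := ihr
      have h2 := ih (r+3)
      -- goal: (LSet (r+1) (n+1)).ncard * (3*(n+1)+(r+1)) = (r+1) * choose (3*(n+1)+(r+1)) (n+1)
      have hM : (0:ℕ) < 3*n+r+3 := by omega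
      apply Nat.eq_of_mul_eq_mul_right hM
      have e1 : (LSet r (n+1)).ncard * (3*n+r+3) = r * Nat.choose (3*n+r+3) (n+1) := by
        have := ih r  -- wrong: ih is for n? no. ihr is about LSet r (n+1)
        calc (LSet r (n+1)).ncard * (3*n+r+3) = (LSet r (n+1)).ncard * (3*(n+1)+r) := by ring_nf
          _ = r * Nat.choose (3*(n+1)+r) (n+1) := ihr
          _ = r * Nat.choose (3*n+r+3) (n+1) := by ring_nf
      have e2 : (LSet (r+3) n).ncard * (3*n+r+3) = (r+3) * Nat.choose (3*n+r+3) n := by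
        calc (LSet (r+3) n).ncard * (3*n+r+3) = (LSet (r+3) n).ncard * (3*n+(r+3)) := by ring_nf
          _ = (r+3) * Nat.choose (3*n+(r+3)) n := ih (r+3)
          _ = (r+3) * Nat.choose (3*n+r+3) n := by ring_nf
      calc (LSet (r+1) (n+1)).ncard * (3*(n+1)+(r+1)) * (3*n+r+3)
          = ((LSet r (n+1)).ncard + (LSet (r+3) n).ncard) * (3*n+r+4) * (3*n+r+3) := by
            rw [hrec]; ring_nf
        _ = (3*n+r+4) * ((LSet r (n+1)).ncard * (3*n+r+3) + (LSet (r+3) n).ncard * (3*n+r+3)) := by ring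
        _ = (3*n+r+4) * (r * Nat.choose (3*n+r+3) (n+1) + (r+3) * Nat.choose (3*n+r+3) n) := by
            rw [e1, e2]
        _ = (r+1) * ((3*n+r+3) * Nat.choose (3*n+r+4) (n+1)) := key_id n r
        _ = (r+1) * Nat.choose (3*(n+1)+(r+1)) (n+1) * (3*n+r+3) := by
            have : 3*(n+1)+(r+1) = 3*n+r+4 := by omega
            rw [this]; ring


open Nat in
lemma id2 (m : ℕ) : Nat.choose (3*m+1) m * (2*m+1) = Nat.choose (3*m) m * (3*m+1) := by
  have e1 := chfac (3*m+1) m (2*m+1) (by omega)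
  have e2 := chfac (3*m) m (2*m) (by omega)
  have hD : ((2*m+1)! : ℚ) = (2*m+1) * (2*m)! := by
    exact_mod_cast Nat.factorial_succ (2*m)
  have hG : ((3*m+1)! : ℚ) = (3*m+1) * (3*m)! := by
    exact_mod_cast Nat.factorial_succ (3*m)
  have hFn : (m ! : ℚ) ≠ 0 := by exact_mod_cast Nat.factorial_ne_zero m
  have hFB : ((2*m)! : ℚ) ≠ 0 := by exact_mod_cast Nat.factorial_ne_zero _
  have q : (Nat.choose (3*m+1) m * (2*m+1) : ℚ) = Nat.choose (3*m) m * (3*m+1) := by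
    simp only [hD, hG] at e1 e2
    have hc1 : (Nat.choose (3*m+1) m : ℚ) = (3*m+1) * (3*m)! / (m ! * ((2*m+1) * (2*m)!)) := by
      rw [eq_div_iff (by positivity)]; linarith [e1]
    have hc2 : (Nat.choose (3*m) m : ℚ) = (3*m)! / (m ! * (2*m)!) := by
      rw [eq_div_iff (by positivity)]; linarith [e2]
    rw [hc1, hc2]
    field_simp
  exact_mod_cast q

open Nat in
lemma id3 (m : ℕ) :
    2 * Nat.choose (3*m+2) m * (2*m+1) = Nat.choose (3*m+1) (m+1) * (3*m+2) := by
  have e1 := chfac (3*m+2) m (2*m+2) (by omega)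
  have e2 := chfac (3*m+1) (m+1) (2*m) (by omega)
  have hA : ((m+1)! : ℚ) = (m+1) * m ! := by exact_mod_cast Nat.factorial_succ m
  have hD : ((2*m+2)! : ℚ) = (2*m+2) * ((2*m+1) * (2*m)!) := by
    have h1 : (2*m+2)! = (2*m+2) * (2*m+1)! := Nat.factorial_succ (2*m+1)
    have h2 : (2*m+1)! = (2*m+1) * (2*m)! := Nat.factorial_succ (2*m)
    rw [h1, h2]; push_cast; ring
  have hG : ((3*m+2)! : ℚ) = (3*m+2) * (3*m+1)! := by
    exact_mod_cast Nat.factorial_succ (3*m+1)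
  have hFn : (m ! : ℚ) ≠ 0 := by exact_mod_cast Nat.factorial_ne_zero m
  have hFB : ((2*m)! : ℚ) ≠ 0 := by exact_mod_cast Nat.factorial_ne_zero _
  have hFF : ((3*m+1)! : ℚ) ≠ 0 := by exact_mod_cast Nat.factorial_ne_zero _
  have q : (2 * Nat.choose (3*m+2) m * (2*m+1) : ℚ) = Nat.choose (3*m+1) (m+1) * (3*m+2) := by
    simp only [hA, hD, hG] at e1 e2
    have hc1 : (Nat.choose (3*m+2) m : ℚ)
        = (3*m+2) * (3*m+1)! / (m ! * ((2*m+2) * ((2*m+1) * (2*m)!))) := by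
      rw [eq_div_iff (by positivity)]; linarith [e1]
    have hc2 : (Nat.choose (3*m+1) (m+1) : ℚ) = (3*m+1)! / ((m+1) * m ! * (2*m)!) := by
      rw [eq_div_iff (by positivity)]; linarith [e2]
    rw [hc1, hc2]
    field_simp
  exact_mod_cast q

lemma lemma_one (m : ℕ) : (LSet 1 m).ncard * (2*m+1) = Nat.choose (3*m) m := by
  have h := main_count m 1
  have hpos : (0:ℕ) < 3*m+1 := by omega
  apply Nat.eq_of_mul_eq_mul_right hpos
  calc (LSet 1 m).ncard * (2*m+1) * (3*m+1)
      = (LSet 1 m).ncard * (3*m+1) * (2*m+1) := by ring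
    _ = 1 * Nat.choose (3*m+1) m * (2*m+1) := by rw [h]
    _ = Nat.choose (3*m) m * (3*m+1) := by rw [one_mul]; exact id2 m

lemma lemma_two (m : ℕ) : (LSet 2 m).ncard * (2*m+1) = Nat.choose (3*m+1) (m+1) := by
  have h := main_count m 2
  have hpos : (0:ℕ) < 3*m+2 := by omega
  apply Nat.eq_of_mul_eq_mul_right hpos
  calc (LSet 2 m).ncard * (2*m+1) * (3*m+2)
      = (LSet 2 m).ncard * (3*m+2) * (2*m+1) := by ring
    _ = 2 * Nat.choose (3*m+2) m * (2*m+1) := by rw [h]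
    _ = Nat.choose (3*m+1) (m+1) * (3*m+2) := id3 m


def phi : TTree → TTree
  | .leaf => .leaf
  | .node a b c => .node a (.node b (phi c) (mirror b)) (mirror a)

lemma internal_phi (t : TTree) : internal (phi t) = 2 * internal t := by
  induction t with
  | leaf => rfl
  | node a b c _ _ hc =>
      simp only [phi, internal, hc, internal_mirror]; omega

lemma isSym_phi (t : TTree) : IsSym (phi t) := by
  induction t with
  | leaf => trivial
  | node a b c _ _ hc => exact ⟨rfl, rfl, hc⟩

lemma phi_inj : Function.Injective phi := by
  intro s t h
  induction s generalizing t with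
  | leaf => cases t with
    | leaf => rfl
    | node a b c => simp [phi] at h
  | node a b c _ _ hc =>
    cases t with
    | leaf => simp [phi] at h
    | node a' b' c' =>
      simp only [phi, TTree.node.injEq] at h
      obtain ⟨h1, ⟨h2, h3, _⟩, _⟩ := h
      simp only [TTree.node.injEq]
      exact ⟨h1, h2, hc h3⟩

lemma phi_surj : ∀ n : ℕ, ∀ t : TTree, internal t ≤ n → IsSym t → internal t % 2 = 0 →
    ∃ s, phi s = t := by
  intro n
  induction n with
  | zero =>
    intro t h _ _
    rw [internal_eq_zero (Nat.le_zero.mp h)]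
    exact ⟨.leaf, rfl⟩
  | succ n ih =>
    intro t h hs he
    cases t with
    | leaf => exact ⟨.leaf, rfl⟩
    | node a b c =>
      obtain ⟨hc, hb⟩ := hs
      subst hc
      cases b with
      | leaf =>
        exfalso
        simp only [internal, internal_mirror] at he
        omega
      | node p q r =>
        obtain ⟨hr, hq⟩ := hb
        subst hr
        have hqe : internal q % 2 = 0 := by
          simp only [internal, internal_mirror] at he; omega
        have hqle : internal q ≤ n := by
          simp only [internal, internal_mirror] at h; omega
        obtain ⟨s, rfl⟩ := ih q hqle hq hqe
        exact ⟨.node a p s, rfl⟩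

lemma even_set (m : ℕ) :
    {t : TTree | internal t = 2 * m ∧ IsSym t} = phi '' {t | internal t = m} := by
  ext t
  constructor
  · rintro ⟨hi, hs⟩
    obtain ⟨s, rfl⟩ := phi_surj (internal t) t le_rfl hs (by omega)
    refine ⟨s, ?_, rfl⟩
    have := internal_phi s
    simp only [Set.mem_setOf_eq]
    omega
  · rintro ⟨s, hs, rfl⟩
    exact ⟨by rw [internal_phi, hs], isSym_phi s⟩

def psi (p : TTree × TTree) : TTree := .node p.1 (phi p.2) (mirror p.1)

lemma psi_inj : Function.Injective psi := by
  rintro ⟨a, s⟩ ⟨a', s'⟩ h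
  simp only [psi, TTree.node.injEq] at h
  obtain ⟨h1, h2, _⟩ := h
  simp [h1, phi_inj h2]

lemma odd_set (m : ℕ) :
    {t : TTree | internal t = 2 * m + 1 ∧ IsSym t}
      = psi '' {p : TTree × TTree | internal p.1 + internal p.2 = m} := by
  ext t
  constructor
  · rintro ⟨hi, hs⟩
    cases t with
    | leaf => simp [internal] at hi
    | node a b c =>
      obtain ⟨hc, hb⟩ := hs
      subst hc
      have hbe : internal b % 2 = 0 := by
        simp only [internal, internal_mirror] at hi; omega
      obtain ⟨s, rfl⟩ := phi_surj (internal b) b le_rfl hb hbe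
      refine ⟨(a, s), ?_, rfl⟩
      simp only [Set.mem_setOf_eq]
      simp only [internal, internal_mirror, internal_phi] at hi
      omega
  · rintro ⟨⟨a, s⟩, hp, rfl⟩
    simp only [Set.mem_setOf_eq] at hp
    refine ⟨?_, rfl, isSym_phi s⟩
    simp only [psi, internal, internal_mirror, internal_phi]
    omega

lemma LSet_one_eq (m : ℕ) :
    LSet 1 m = (fun t => [t]) '' {t : TTree | internal t = m} := by
  ext l
  constructor
  · rintro ⟨hlen, hsum⟩
    match l with
    | [t] => exact ⟨t, by simpa using hsum, rfl⟩
  · rintro ⟨t, ht, rfl⟩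
    exact ⟨rfl, by simpa using ht⟩

lemma LSet_two_eq (m : ℕ) :
    LSet 2 m = (fun p : TTree × TTree => [p.1, p.2])
      '' {p : TTree × TTree | internal p.1 + internal p.2 = m} := by
  ext l
  constructor
  · rintro ⟨hlen, hsum⟩
    match l with
    | [t, u] =>
      refine ⟨(t, u), ?_, rfl⟩
      simpa using hsum
  · rintro ⟨⟨t, u⟩, hp, rfl⟩
    refine ⟨rfl, ?_⟩
    simpa using hp

end TTreeAux

open TTreeAux

theorem stmt_13 (m : ℕ) :
    {t : TTree | internal t = 2 * m ∧ IsSym t}.ncard * (2 * m + 1)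
        = Nat.choose (3 * m) m ∧
    {t : TTree | internal t = 2 * m + 1 ∧ IsSym t}.ncard * (2 * m + 1)
        = Nat.choose (3 * m + 1) (m + 1) := by
  constructor
  · have h : {t : TTree | internal t = 2 * m ∧ IsSym t}.ncard = (LSet 1 m).ncard := by
      rw [even_set, LSet_one_eq, Set.ncard_image_of_injective _ phi_inj,
        Set.ncard_image_of_injective _ (fun a b h => by simpa using h)]
    rw [h]
    exact lemma_one m
  · have h : {t : TTree | internal t = 2 * m + 1 ∧ IsSym t}.ncard = (LSet 2 m).ncard := by
      rw [odd_set, LSet_two_eq, Set.ncard_image_of_injective _ psi_inj,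
        Set.ncard_image_of_injective _ (fun (a : TTree × TTree) b h => by
          simpa [Prod.ext_iff] using h)]
    rw [h]
    exact lemma_two m
end

section
/- There is a bijection between the set of even plane trees with 2n edges (plane trees in which every vertex has an even number of children) and the set of ternary trees with n internal vertices. -/
/-!
In the first-child/next-sibling encoding an even forest has its top-level trees, and the children
of every node, in pairs. Reading off the first pair `c, c'` of a forest `c :: c' :: s` gives a
ternary node whose three subtrees encode `c`, `c'` and the rest `s`; conversely a ternary node
`(a, b, c)` unfolds to two consecutive trees. Each internal ternary vertex thus accounts for exactly
two nodes of the forest, i.e. two edges of the plane tree.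
-/

/-- Plane forests in first-child/next-sibling representation: a plane tree is
identified with the forest of subtrees of its root. -/
inductive PForest : Type
  | nil : PForest
  | cons (child sibling : PForest) : PForest

namespace PForest

/-- Number of trees at the top level (= number of children of the parent node). -/
def len : PForest → ℕ
  | nil => 0
  | cons _ s => 1 + len s

/-- Total number of nodes (= number of edges of the corresponding plane tree). -/
def nodes : PForest → ℕ
  | nil => 0
  | cons c s => 1 + nodes c + nodes s

/-- Every node in the forest has an even number of children. -/
def evenF : PForest → Prop
  | nil => True
  | cons c s => len c % 2 = 0 ∧ evenF c ∧ evenF s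

end PForest

namespace TTree

def toPForest : TTree → PForest
  | leaf => .nil
  | node a b c => .cons a.toPForest (.cons b.toPForest c.toPForest)

theorem len_toPForest_mod_two (t : TTree) : t.toPForest.len % 2 = 0 := by
  induction t with
  | leaf => rfl
  | node a b c _ _ ihc =>
    simp only [toPForest, PForest.len]
    omega

theorem evenF_toPForest (t : TTree) : t.toPForest.evenF := by
  induction t with
  | leaf => trivial
  | node a b c iha ihb ihc =>
    exact ⟨len_toPForest_mod_two a, iha, len_toPForest_mod_two b, ihb, ihc⟩

theorem nodes_toPForest (t : TTree) : t.toPForest.nodes = 2 * t.internal := by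
  induction t with
  | leaf => rfl
  | node a b c iha ihb ihc =>
    simp only [toPForest, PForest.nodes, internal]
    omega

end TTree

namespace PForest

/-- Inverse of `TTree.toPForest` on even forests; a forest of odd length ends in a junk `leaf`. -/
def toTTree : PForest → TTree
  | nil => .leaf
  | cons _ nil => .leaf
  | cons c (cons c' s) => .node c.toTTree c'.toTTree s.toTTree

theorem toTTree_toPForest (t : TTree) : t.toPForest.toTTree = t := by
  induction t with
  | leaf => rfl
  | node a b c iha ihb ihc => simp only [TTree.toPForest, toTTree, iha, ihb, ihc]

theorem toPForest_toTTree : ∀ f : PForest, f.len % 2 = 0 → f.evenF → f.toTTree.toPForest = f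
  | nil, _, _ => rfl
  | cons c nil, hlen, _ => by simp [len] at hlen
  | cons c (cons c' s), hlen, ⟨hc, ec, hc', ec', es⟩ => by
    have hs : s.len % 2 = 0 := by
      simp only [len] at hlen
      omega
    simp only [toTTree, TTree.toPForest, toPForest_toTTree c hc ec,
      toPForest_toTTree c' hc' ec', toPForest_toTTree s hs es]

theorem two_mul_internal_toTTree (f : PForest) (hlen : f.len % 2 = 0) (heven : f.evenF) :
    2 * f.toTTree.internal = f.nodes := by
  rw [← TTree.nodes_toPForest, toPForest_toTTree f hlen heven]

end PForest

/-- There is a bijection between even plane trees with `2n` edges (every vertex,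
including the root, has an even number of children) and ternary trees with `n`
internal vertices. -/
theorem stmt_14 (n : ℕ) :
    Nonempty
      ({f : PForest // PForest.len f % 2 = 0 ∧ PForest.evenF f ∧ PForest.nodes f = 2 * n} ≃
       {t : TTree // TTree.internal t = n}) := by
  refine ⟨{
    toFun := fun ⟨f, hlen, heven, hnodes⟩ =>
      ⟨f.toTTree, by have := f.two_mul_internal_toTTree hlen heven; omega⟩
    invFun := fun ⟨t, ht⟩ =>
      ⟨t.toPForest, t.len_toPForest_mod_two, t.evenF_toPForest, by rw [t.nodes_toPForest, ht]⟩
    left_inv := fun ⟨f, hlen, heven, _⟩ => Subtype.ext (f.toPForest_toTTree hlen heven)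
    right_inv := fun ⟨t, _⟩ => Subtype.ext (PForest.toTTree_toPForest t) }⟩
end

section
/- For every positive integer n, ∑_{m=n}^{2n-1} (1/n) C(3n, n+1+m) C(m-1, n-1) = ∑_{k=0}^{n-1} (1/n) C(n-1+k, n-1) C(2n-k, n+1) 2^k. -/
open Polynomial Finset

noncomputable def Qp (n p : ℕ) : Polynomial ℚ :=
  ∑ j ∈ Finset.range n, C ((Nat.choose (p + j) j : ℚ)) * X ^ j

noncomputable def Tp (M n p : ℕ) : Polynomial ℚ :=
  ∑ k ∈ Finset.range n,
    C ((Nat.choose (p + k) k : ℚ)) * ((2 * X) ^ k * (1 + X) ^ (M - k))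

lemma Qp_succ (n p : ℕ) :
    Qp (n + 1) p = Qp n p + C ((Nat.choose (p + n) n : ℚ)) * X ^ n := by
  simp [Qp, Finset.sum_range_succ]

lemma Tp_succ (M n p : ℕ) :
    Tp M (n + 1) p = Tp M n p
      + C ((Nat.choose (p + n) n : ℚ)) * ((2 * X) ^ n * (1 + X) ^ (M - n)) := by
  simp [Tp, Finset.sum_range_succ]

lemma pascalC (a b : ℕ) :
    (C ((Nat.choose (a + (b + 1)) (b + 1) : ℚ)) : Polynomial ℚ)
      = C ((Nat.choose (a + b) b : ℚ)) + C ((Nat.choose (a + b) (b + 1) : ℚ)) := by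
  rw [← map_add]
  congr 1
  have h : a + (b + 1) = (a + b) + 1 := by omega
  rw [h, Nat.choose_succ_succ]
  push_cast
  ring

lemma qstep (n p : ℕ) :
    (1 - X) * Qp (n + 1) (p + 1)
      = Qp (n + 1) p - C ((Nat.choose (p + 1 + n) n : ℚ)) * X ^ (n + 1) := by
  induction n with
  | zero => simp [Qp]
  | succ m ih =>
      rw [Qp_succ (m + 1) (p + 1), Qp_succ (m + 1) p, mul_add, ih]
      have hC := pascalC (p + 1) m
      have h2 : p + (m + 1) = p + 1 + m := by omega
      rw [h2]
      linear_combination (X : Polynomial ℚ) ^ (m + 1) * hC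

lemma tstep (M n p : ℕ) (h : n ≤ M) :
    (1 - X) * Tp M (n + 1) (p + 1)
      = (1 + X) * Tp M (n + 1) p
        - C ((Nat.choose (p + 1 + n) n : ℚ)) * ((2 * X) ^ (n + 1) * (1 + X) ^ (M - n)) := by
  induction n with
  | zero =>
      simp [Tp]
      ring
  | succ m ih =>
      have hm : m ≤ M := by omega
      rw [Tp_succ M (m + 1) (p + 1), Tp_succ M (m + 1) p, mul_add, mul_add, ih hm]
      have hE : ((1 + X : Polynomial ℚ)) ^ (M - m) = (1 + X) ^ (M - (m + 1)) * (1 + X) := by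
        rw [← pow_succ]
        congr 1
        omega
      rw [hE]
      have hC := pascalC (p + 1) m
      have h2 : p + (m + 1) = p + 1 + m := by omega
      rw [h2]
      linear_combination ((2 * X : Polynomial ℚ) ^ (m + 1) * ((1 + X) ^ (M - (m + 1)) * (1 + X))) * hC

lemma q0 (n : ℕ) : (1 - X) * Qp n 0 = 1 - X ^ n := by
  have hq : Qp n 0 = ∑ j ∈ Finset.range n, (X : Polynomial ℚ) ^ j := by
    simp [Qp]
  have h := geom_sum_mul (X : Polynomial ℚ) n
  rw [hq]
  linear_combination -h

lemma t0 (M n : ℕ) (h : n ≤ M) :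
    (1 - X) * Tp M n 0
      = (1 + X) ^ (M + 1) - (2 * X) ^ n * (1 + X) ^ (M + 1 - n) := by
  induction n with
  | zero => simp [Tp]
  | succ m ih =>
      rw [Tp_succ, mul_add, ih (by omega)]
      have hE1 : ((1 + X : Polynomial ℚ)) ^ (M + 1 - m) = (1 + X) ^ (M - m) * (1 + X) := by
        rw [← pow_succ]; congr 1; omega
      have hE2 : M + 1 - (m + 1) = M - m := by omega
      rw [hE1, hE2]
      simp
      ring

lemma qstep_dvd (n p : ℕ) :
    (X : Polynomial ℚ) ^ n ∣ (1 - X) * Qp n (p + 1) - Qp n p := by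
  cases n with
  | zero => simp [Qp]
  | succ m =>
      exact ⟨-C ((Nat.choose (p + 1 + m) m : ℚ)), by rw [qstep]; ring⟩

lemma tstep_dvd (M n p : ℕ) (h : n ≤ M) :
    (X : Polynomial ℚ) ^ n ∣ (1 - X) * Tp M n (p + 1) - (1 + X) * Tp M n p := by
  cases n with
  | zero => simp [Tp]
  | succ m =>
      refine ⟨-(C ((Nat.choose (p + 1 + m) m : ℚ)) * (2 ^ (m + 1) * (1 + X) ^ (M - m))), ?_⟩
      rw [tstep M m p (by omega)]
      ring

lemma qchain (n p : ℕ) :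
    (X : Polynomial ℚ) ^ n ∣ (1 - X) ^ p * Qp n p - Qp n 0 := by
  induction p with
  | zero => simp
  | succ q ih =>
      have h1 := (qstep_dvd n q).mul_left ((1 - X : Polynomial ℚ) ^ q)
      have e : (1 - X : Polynomial ℚ) ^ (q + 1) * Qp n (q + 1) - Qp n 0
          = (1 - X) ^ q * ((1 - X) * Qp n (q + 1) - Qp n q)
            + ((1 - X) ^ q * Qp n q - Qp n 0) := by ring
      rw [e]
      exact dvd_add h1 ih

lemma tchain (M n p : ℕ) (h : n ≤ M) :
    (X : Polynomial ℚ) ^ n ∣ (1 - X) ^ p * Tp M n p - (1 + X) ^ p * Tp M n 0 := by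
  induction p with
  | zero => simp
  | succ q ih =>
      have h1 := (tstep_dvd M n q h).mul_left ((1 - X : Polynomial ℚ) ^ q)
      have e : (1 - X : Polynomial ℚ) ^ (q + 1) * Tp M n (q + 1) - (1 + X) ^ (q + 1) * Tp M n 0
          = (1 - X) ^ q * ((1 - X) * Tp M n (q + 1) - (1 + X) * Tp M n q)
            + (1 + X) * ((1 - X) ^ q * Tp M n q - (1 + X) ^ q * Tp M n 0) := by ring
      rw [e]
      exact dvd_add h1 (ih.mul_left _)

lemma key1 (N : ℕ) :
    (X : Polynomial ℚ) ^ (N + 1) ∣ (1 - X) ^ (N + 1) * Qp (N + 1) N - 1 := by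
  obtain ⟨u, hu⟩ := qchain (N + 1) N
  exact ⟨(1 - X) * u - 1, by linear_combination (1 - X : Polynomial ℚ) * hu + q0 (N + 1)⟩

lemma key2 (N : ℕ) :
    (X : Polynomial ℚ) ^ (N + 1) ∣
      (1 - X) ^ (N + 1) * Tp (2 * (N + 1)) (N + 1) N - (1 + X) ^ (3 * (N + 1)) := by
  obtain ⟨v, hv⟩ := tchain (2 * (N + 1)) (N + 1) N (by omega)
  have ht0 := t0 (2 * (N + 1)) (N + 1) (by omega)
  refine ⟨(1 - X) * v - 2 ^ (N + 1) * (1 + X) ^ (N + (2 * (N + 1) + 1 - (N + 1))), ?_⟩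
  linear_combination (1 - X : Polynomial ℚ) * hv + (1 + X : Polynomial ℚ) ^ N * ht0

lemma key3 (N : ℕ) :
    (X : Polynomial ℚ) ^ (N + 1) ∣
      Qp (N + 1) N * (1 + X) ^ (3 * (N + 1)) - Tp (2 * (N + 1)) (N + 1) N := by
  obtain ⟨u, hu⟩ := key1 N
  obtain ⟨v, hv⟩ := key2 N
  refine ⟨Tp (2 * (N + 1)) (N + 1) N * u - Qp (N + 1) N * v, ?_⟩
  linear_combination Tp (2 * (N + 1)) (N + 1) N * hu - Qp (N + 1) N * hv

lemma coeff_eq_of_dvd {A B : Polynomial ℚ} {n i : ℕ}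
    (h : (X : Polynomial ℚ) ^ n ∣ A - B) (hi : i < n) : A.coeff i = B.coeff i := by
  obtain ⟨c, hc⟩ := h
  have hA : A = B + X ^ n * c := by linear_combination hc
  rw [hA, Polynomial.coeff_add, Polynomial.coeff_X_pow_mul', if_neg (by omega), add_zero]

lemma coeffQ (N m : ℕ) :
    (Qp (N + 1) N * (1 + X) ^ m).coeff N
      = ∑ j ∈ Finset.range (N + 1),
          ((N + j).choose j : ℚ) * (m.choose (N - j) : ℚ) := by
  rw [Qp, Finset.sum_mul, Polynomial.finset_sum_coeff]
  refine Finset.sum_congr rfl fun j hj => ?_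
  have hj' : j ≤ N := by
    have := Finset.mem_range.mp hj; omega
  rw [mul_assoc, Polynomial.coeff_C_mul, Polynomial.coeff_X_pow_mul', if_pos hj',
    Polynomial.coeff_one_add_X_pow]

lemma coeffT (N M : ℕ) :
    (Tp M (N + 1) N).coeff N
      = ∑ k ∈ Finset.range (N + 1),
          ((N + k).choose k : ℚ) * (((M - k).choose (N - k) : ℚ) * 2 ^ k) := by
  rw [Tp, Polynomial.finset_sum_coeff]
  refine Finset.sum_congr rfl fun k hk => ?_
  have hk' : k ≤ N := by
    have := Finset.mem_range.mp hk; omega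
  have h2 : ((2 * X : Polynomial ℚ)) ^ k * (1 + X) ^ (M - k)
      = C ((2 : ℚ) ^ k) * (X ^ k * (1 + X) ^ (M - k)) := by
    rw [Polynomial.C_pow, map_ofNat]
    ring
  rw [h2, Polynomial.coeff_C_mul, Polynomial.coeff_C_mul, Polynomial.coeff_X_pow_mul',
    if_pos hk', Polynomial.coeff_one_add_X_pow]
  ring

theorem stmt_18 (n : ℕ) (hn : 0 < n) :
    ∑ m ∈ Finset.Icc n (2 * n - 1),
      (1 / n : ℚ) * (Nat.choose (3 * n) (n + 1 + m)) * (Nat.choose (m - 1) (n - 1))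
      = ∑ k ∈ Finset.range n,
          (1 / n : ℚ) * (Nat.choose (n - 1 + k) (n - 1)) * (Nat.choose (2 * n - k) (n + 1)) *
            2 ^ k := by
  obtain ⟨N, rfl⟩ : ∃ N, n = N + 1 := ⟨n - 1, by omega⟩
  have hset : Finset.Icc (N + 1) (2 * (N + 1) - 1)
      = Finset.image (fun j => (N + 1) + j) (Finset.range (N + 1)) := by
    ext m
    simp only [Finset.mem_Icc, Finset.mem_image, Finset.mem_range]
    constructor
    · intro hm; exact ⟨m - (N + 1), by omega, by omega⟩
    · rintro ⟨j, hj, rfl⟩; omega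
  rw [hset, Finset.sum_image (fun a _ b _ h => by omega)]
  have e1 : ∑ j ∈ Finset.range (N + 1),
        (1 / ((N : ℚ) + 1)) * ((3 * (N + 1)).choose ((N + 1) + 1 + ((N + 1) + j)) : ℚ)
          * (((N + 1) + j - 1).choose ((N + 1) - 1) : ℚ)
      = (1 / ((N : ℚ) + 1)) * ∑ j ∈ Finset.range (N + 1),
          ((N + j).choose j : ℚ) * ((3 * (N + 1)).choose (N - j) : ℚ) := by
    rw [Finset.mul_sum]
    refine Finset.sum_congr rfl fun j hj => ?_
    have hj' : j ≤ N := by have := Finset.mem_range.mp hj; omega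
    have c1 : (3 * (N + 1)).choose ((N + 1) + 1 + ((N + 1) + j))
        = (3 * (N + 1)).choose (N - j) := by
      rw [← Nat.choose_symm (show (N + 1) + 1 + ((N + 1) + j) ≤ 3 * (N + 1) by omega)]
      congr 1
      omega
    have c2 : ((N + 1) + j - 1).choose ((N + 1) - 1) = (N + j).choose j := by
      have h1 : (N + 1) + j - 1 = N + j := by omega
      have h2 : (N + 1) - 1 = N := by omega
      rw [h1, h2, ← Nat.choose_symm (show j ≤ N + j by omega)]
      congr 1
      omega
    rw [c1, c2]
    ring
  have e2 : ∑ k ∈ Finset.range (N + 1),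
        (1 / ((N : ℚ) + 1)) * (((N + 1) - 1 + k).choose ((N + 1) - 1) : ℚ)
          * ((2 * (N + 1) - k).choose ((N + 1) + 1) : ℚ) * 2 ^ k
      = (1 / ((N : ℚ) + 1)) * ∑ k ∈ Finset.range (N + 1),
          ((N + k).choose k : ℚ) * (((2 * (N + 1) - k).choose (N - k) : ℚ) * 2 ^ k) := by
    rw [Finset.mul_sum]
    refine Finset.sum_congr rfl fun k hk => ?_
    have hk' : k ≤ N := by have := Finset.mem_range.mp hk; omega
    have c3 : ((N + 1) - 1 + k).choose ((N + 1) - 1) = (N + k).choose k := by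
      have h2 : (N + 1) - 1 = N := by omega
      rw [h2, ← Nat.choose_symm (show k ≤ N + k by omega)]
      congr 1
      omega
    have c4 : (2 * (N + 1) - k).choose ((N + 1) + 1) = (2 * (N + 1) - k).choose (N - k) := by
      rw [← Nat.choose_symm (show (N + 1) + 1 ≤ 2 * (N + 1) - k by omega)]
      congr 1
      omega
    rw [c3, c4]
    ring
  push_cast at e1 e2 ⊢
  rw [e1, e2, ← coeffQ N (3 * (N + 1)), ← coeffT N (2 * (N + 1)),
    coeff_eq_of_dvd (key3 N) (Nat.lt_succ_self N)]
end
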